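/- Let C(n,u) be a t-level EII code over a finite field F, with horizontal codes C_i of minimum distance d_i^H and vertical codes V_i of minimum distance d_i^V. Then the minimum distance d of C(n,u) (the least number of nonzero entries of a nonzero array in C(n,u)) satisfies d ≥ min{ d_i^H · d_{t−1−i}^V : 0 ≤ i ≤ t−1 }. -/

import Mathlib

open scoped BigOperators

section Defs

variable {F : Type*} [Field F]

/-- `C` has minimum (symbol-)Hamming distance exactly `d`. -/
def HasMinDist {ι S : Type*} [Fintype ι] [Zero S] [DecidableEq S]
    (C : Set (ι → S)) (d : ℕ) : Prop :=
  (∀ c ∈ C, c ≠ 0 → d ≤ hammingNorm c) ∧ ∃ c ∈ C, c ≠ 0 ∧ hammingNorm c = d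

/-- weight of an `m × n` array: the number of nonzero entries. -/
def arrayWt [DecidableEq F] {m n : ℕ} (A : Matrix (Fin m) (Fin n) F) : ℕ :=
  hammingNorm (fun p : Fin m × Fin n => A p.1 p.2)

/-- `C` admits a systematic encoder on its first `k` coordinates. -/
def SystematicOn {n : ℕ} (C : Submodule F (Fin n → F)) (k : ℕ) : Prop :=
  Function.Bijective (fun (c : C) (i : Fin k) =>
    if h : (i : ℕ) < n then (c : Fin n → F) ⟨i, h⟩ else 0)

/-- symbols of the array in columns `a, a+1, ..., a+w-1`. -/
def colSymb [Zero F] {m n : ℕ} (A : Matrix (Fin m) (Fin n) F) (a w : ℕ) :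
    Fin m → Fin w → F :=
  fun r k => if hk : a + (k : ℕ) < n then A r ⟨a + k, hk⟩ else 0

/-- the 1-level EII code with horizontal code `C0`, vertical code `V0` over `F^w`
(occupying columns `a,…,a+w-1`), and `a` initial zero columns. -/
def OneLevelEII {m n w : ℕ} (C0 : Submodule F (Fin n → F))
    (V0 : Submodule F (Fin m → Fin w → F)) (a : ℕ) :
    Set (Matrix (Fin m) (Fin n) F) :=
  { A | (∀ r (c : Fin n), (c : ℕ) < a → A r c = 0) ∧ (∀ r, A r ∈ C0) ∧
        colSymb A a w ∈ V0 }

/-- the sum of the 1-level EII component codes of levels `a ≤ i < t`, where level `i`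
has horizontal code `Chor i`, vertical code `Vc i` over `F^{u(i+1)-u(i)}`, and
`n - u(i+1)` initial zero columns. -/
def EIICodeRange {m n : ℕ} (a t : ℕ) (u : ℕ → ℕ)
    (Chor : ℕ → Submodule F (Fin n → F))
    (Vc : (i : ℕ) → Submodule F (Fin m → Fin (u (i + 1) - u i) → F)) :
    Set (Matrix (Fin m) (Fin n) F) :=
  { A | ∃ g : ℕ → Matrix (Fin m) (Fin n) F,
        (∀ i, a ≤ i → i < t → g i ∈ OneLevelEII (Chor i) (Vc i) (n - u (i + 1))) ∧
        A = ∑ i ∈ Finset.Ico a t, g i }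

/-- the t-level EII code: sum of the 1-level EII component codes of levels `0 ≤ i < t`. -/
def EIICode {m n : ℕ} (t : ℕ) (u : ℕ → ℕ)
    (Chor : ℕ → Submodule F (Fin n → F))
    (Vc : (i : ℕ) → Submodule F (Fin m → Fin (u (i + 1) - u i) → F)) :
    Set (Matrix (Fin m) (Fin n) F) :=
  EIICodeRange 0 t u Chor Vc

end Defs

/-- The minimum distance `d` of a t-level EII code `C(n,u)` satisfies
`d ≥ min { d_i^H · d_{t−1−i}^V : 0 ≤ i ≤ t−1 }`: every nonzero array of the code has
at least that many nonzero entries. -/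
theorem sys_zero {F : Type*} [Field F] {n k : ℕ} {C : Submodule F (Fin n → F)}
    (h : SystematicOn C k) {c : Fin n → F} (hc : c ∈ C)
    (hz : ∀ i : Fin n, (i : ℕ) < k → c i = 0) : c = 0 := by
  have := h.injective (a₁ := ⟨c, hc⟩) (a₂ := ⟨0, zero_mem _⟩) ?_
  · exact congrArg Subtype.val this
  · funext i
    simp only
    split
    · exact hz _ i.2
    · rfl

theorem stmt4 {F : Type*} [Field F] [DecidableEq F]
    {t n m : ℕ} (ht : 1 ≤ t)
    (u s : ℕ → ℕ) (dH dV : ℕ → ℕ)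
    (hu : ∀ i < t, u i < u (i + 1)) (hun : u t ≤ n)
    (hs : ∀ i < t, 1 ≤ s i) (hst : s t = 0 → u t = n)
    (hm : m = ∑ i ∈ Finset.range (t + 1), s i)
    (Chor : ℕ → Submodule F (Fin n → F))
    (hnest : ∀ i, i + 1 < t → Chor (i + 1) < Chor i)
    (hCdim : ∀ i < t, Module.finrank F (Chor i) = n - u i)
    (hCsys : ∀ i < t, SystematicOn (Chor i) (n - u i))
    (hCdist : ∀ i < t, HasMinDist (Chor i : Set (Fin n → F)) (dH i))
    (Vc : (i : ℕ) → Submodule F (Fin m → Fin (u (i + 1) - u i) → F))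
    (hVdim : ∀ i < t, Module.finrank F (Vc i)
        = (m - ∑ j ∈ Finset.Icc (i + 1) t, s j) * (u (i + 1) - u i))
    (hVdist : ∀ i < t, HasMinDist (Vc i : Set (Fin m → Fin (u (i + 1) - u i) → F))
        (dV (t - 1 - i))) :
    ∀ A ∈ EIICode t u Chor Vc, A ≠ 0 →
      (Finset.range t).inf' (Finset.nonempty_range_iff.mpr (by omega))
        (fun i => dH i * dV (t - 1 - i)) ≤ arrayWt A := by
  classical
  intro A hA hA0
  -- monotonicity of u
  have humono : ∀ b ≤ t, ∀ a ≤ b, u a ≤ u b := by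
    intro b
    induction b with
    | zero => intro _ a ha; rw [Nat.le_zero.mp ha]
    | succ b ih =>
      intro hb a ha
      rcases Nat.eq_or_lt_of_le ha with h | h
      · rw [h]
      · exact (ih (by omega) a (by omega)).trans (hu b (by omega)).le
  -- nesting of horizontal codes
  have hchain : ∀ j < t, ∀ j0 ≤ j, Chor j ≤ Chor j0 := by
    intro j
    induction j with
    | zero => intro _ j0 h; rw [Nat.le_zero.mp h]
    | succ j ih =>
      intro hj j0 h
      rcases Nat.eq_or_lt_of_le h with h | h
      · rw [h]
      · exact le_trans (hnest j hj).le (ih (by omega) j0 (by omega))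
  -- a row of a one-level component whose block symbol vanishes is zero
  have rowzero : ∀ j < t, ∀ g ∈ OneLevelEII (Chor j) (Vc j) (n - u (j + 1)), ∀ r : Fin m,
      colSymb g (n - u (j + 1)) (u (j + 1) - u j) r = 0 → g r = 0 := by
    intro j hj g hg r hcol
    obtain ⟨hzero, hrows, -⟩ := hg
    have hujn : u (j + 1) ≤ n := (humono t le_rfl (j + 1) hj).trans hun
    have huj : u j < u (j + 1) := hu j hj
    refine sys_zero (hCsys j hj) (hrows r) ?_
    intro i hi
    by_cases h2 : (i : ℕ) < n - u (j + 1)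
    · exact hzero r i h2
    · have hk : (i : ℕ) - (n - u (j + 1)) < u (j + 1) - u j := by omega
      have hthis := congrFun hcol ⟨(i : ℕ) - (n - u (j + 1)), hk⟩
      simp only [colSymb, Pi.zero_apply] at hthis
      rw [dif_pos (show n - u (j + 1) + ((i : ℕ) - (n - u (j + 1))) < n by omega)] at hthis
      convert hthis using 2
      simp [Fin.ext_iff]; omega
  obtain ⟨g, hg, hAeq⟩ := hA
  subst hAeq
  have hgmem : ∀ j < t, g j ∈ OneLevelEII (Chor j) (Vc j) (n - u (j + 1)) :=
    fun j hj => hg j (Nat.zero_le _) hj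
  -- the minimal nonzero level j0
  set T : Finset ℕ := (Finset.Ico 0 t).filter (fun j => g j ≠ 0) with hT
  have hTne : T.Nonempty := by
    by_contra hTe
    apply hA0
    refine Finset.sum_eq_zero (fun j hj => ?_)
    by_contra hgj
    exact hTe ⟨j, Finset.mem_filter.mpr ⟨hj, hgj⟩⟩
  set j0 := T.min' hTne with hj0
  have hj0T : j0 ∈ T := T.min'_mem hTne
  have hj0t : j0 < t := (Finset.mem_Ico.mp (Finset.mem_filter.mp hj0T).1).2
  have hgj0 : g j0 ≠ 0 := (Finset.mem_filter.mp hj0T).2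
  have hlow : ∀ j < j0, g j = 0 := by
    intro j hj
    by_contra hgj
    by_cases hjt : j < t
    · exact absurd (T.min'_le j (Finset.mem_filter.mpr ⟨Finset.mem_Ico.mpr ⟨Nat.zero_le _, hjt⟩, hgj⟩)) (by omega)
    · omega
  -- the block symbol vector of level j0
  set v := colSymb (g j0) (n - u (j0 + 1)) (u (j0 + 1) - u j0) with hv
  have hvmem : v ∈ Vc j0 := (hgmem j0 hj0t).2.2
  have hvne : v ≠ 0 := by
    intro hv0
    apply hgj0
    funext r c
    have := rowzero j0 hj0t (g j0) (hgmem j0 hj0t) r (congrFun hv0 r)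
    exact congrFun this c
  have hvnorm : dV (t - 1 - j0) ≤ hammingNorm v := (hVdist j0 hj0t).1 v hvmem hvne
  set A := ∑ i ∈ Finset.Ico 0 t, g i with hAdef
  -- rows in the support of v are nonzero rows of A
  have hsupp : ∀ r : Fin m, v r ≠ 0 → A r ≠ 0 := by
    intro r hvr
    have hgj0r : g j0 r ≠ 0 := by
      intro h0
      apply hvr
      funext k
      simp only [hv, colSymb]
      split
      · exact congrFun h0 _
      · rfl
    set T' : Finset ℕ := (Finset.Ico 0 t).filter (fun j => g j r ≠ 0) with hT'
    have hT'ne : T'.Nonempty :=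
      ⟨j0, Finset.mem_filter.mpr ⟨Finset.mem_Ico.mpr ⟨Nat.zero_le _, hj0t⟩, hgj0r⟩⟩
    set M := T'.max' hT'ne with hM
    have hMT : M ∈ T' := T'.max'_mem hT'ne
    have hMt : M < t := (Finset.mem_Ico.mp (Finset.mem_filter.mp hMT).1).2
    have hgMr : g M r ≠ 0 := (Finset.mem_filter.mp hMT).2
    have hcolM : colSymb (g M) (n - u (M + 1)) (u (M + 1) - u M) r ≠ 0 := by
      intro h0
      exact hgMr (rowzero M hMt (g M) (hgmem M hMt) r h0)
    obtain ⟨k, hk⟩ := Function.ne_iff.mp hcolM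
    have hukn : u (M + 1) ≤ n := (humono t le_rfl (M + 1) hMt).trans hun
    have huM : u M < u (M + 1) := hu M hMt
    by_cases hkn : n - u (M + 1) + (k : ℕ) < n
    case neg => simp [colSymb, hkn] at hk
    simp only [colSymb, dif_pos hkn] at hk
    set c : Fin n := ⟨n - u (M + 1) + (k : ℕ), hkn⟩ with hc
    have hcb : (c : ℕ) < n - u M := by
      have := k.2
      simp only [hc]
      omega
    have hArc : A r c = g M r c := by
      rw [hAdef, Matrix.sum_apply]
      refine Finset.sum_eq_single_of_mem M (Finset.mem_Ico.mpr ⟨Nat.zero_le _, hMt⟩) ?_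
      intro j hj hne
      by_cases hgj : g j r = 0
      · exact congrFun hgj c
      · have hjT' : j ∈ T' := Finset.mem_filter.mpr ⟨hj, hgj⟩
        have hjM : j < M := lt_of_le_of_ne (T'.le_max' j hjT') hne
        have hub : u (j + 1) ≤ u M := humono M hMt.le (j + 1) (by omega)
        exact (hgmem j (Finset.mem_Ico.mp hj).2).1 r c (by omega)
    intro hAr0
    rw [congrFun hAr0 c] at hArc
    exact hk hArc.symm
  -- every row of A lies in Chor j0
  have hrowmem : ∀ r : Fin m, A r ∈ Chor j0 := by
    intro r
    rw [hAdef, show (∑ i ∈ Finset.Ico 0 t, g i) r = ∑ i ∈ Finset.Ico 0 t, g i r from funext fun c => (Matrix.sum_apply _ _ _ _).trans (Finset.sum_apply _ _ _).symm]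
    refine Submodule.sum_mem _ (fun j hj => ?_)
    rcases lt_or_ge j j0 with h | h
    · rw [hlow j h]; exact zero_mem _
    · exact hchain j (Finset.mem_Ico.mp hj).2 j0 h ((hgmem j (Finset.mem_Ico.mp hj).2).2.1 r)
  -- counting
  set N : Finset (Fin m) := Finset.univ.filter (fun r => A r ≠ 0) with hN
  have hsplit : arrayWt A = ∑ r : Fin m, hammingNorm (A r) := by
    simp [arrayWt, hammingNorm, Finset.card_filter, Fintype.sum_prod_type]
  have h1 : ∑ r ∈ N, hammingNorm (A r) ≤ ∑ r : Fin m, hammingNorm (A r) :=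
    Finset.sum_le_sum_of_subset (Finset.filter_subset _ _)
  have h2 : N.card * dH j0 ≤ ∑ r ∈ N, hammingNorm (A r) := by
    calc N.card * dH j0 = ∑ _r ∈ N, dH j0 := by rw [Finset.sum_const, smul_eq_mul]
    _ ≤ ∑ r ∈ N, hammingNorm (A r) := by
        refine Finset.sum_le_sum (fun r hr => ?_)
        exact (hCdist j0 hj0t).1 (A r) (hrowmem r) (Finset.mem_filter.mp hr).2
  have h3 : hammingNorm v ≤ N.card := by
    refine Finset.card_le_card ?_
    intro r hr
    rw [Finset.mem_filter] at hr ⊢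
    exact ⟨Finset.mem_univ _, hsupp r hr.2⟩
  have hfin : dH j0 * dV (t - 1 - j0) ≤ arrayWt A := by
    have : dH j0 * dV (t - 1 - j0) ≤ N.card * dH j0 := by
      rw [Nat.mul_comm]
      exact Nat.mul_le_mul_right _ (le_trans hvnorm h3)
    omega
  exact le_trans (Finset.inf'_le _ (Finset.mem_range.mpr hj0t)) hfin
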